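/- For each even integer x ≥ 4, the sequence [0, x, 2x, 2x+1, x+1, 1, 2, x+2, 2x+2, ..., x-4, 2x-4, 3x-4, x-3, 2x-3, 2x-2, x-2, 3x-3, 3x-2, x-1, 2x-1] is a Hamiltonian path on {0,...,3x-2} in K_{3x-1} whose multiset of edge lengths is {1^{x-2}, x^{2x}}, where the length of an edge between u and w is min(|u-w|, (3x-1)-|u-w|). -/
import Mathlib


/-- The cyclic edge length between vertices `a` and `b` in `K_v`. -/
def ell (v a b : ℕ) : ℕ := min (Nat.dist a b) (v - Nat.dist a b)

/-- The multiset of edge lengths of a path `h` in `K_v`. -/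
def edgeLengths (v : ℕ) (h : List ℕ) : Multiset ℕ :=
  ↑(List.zipWith (ell v) h h.tail)

/-- `h` is a Hamiltonian path on the vertex set `{0, ..., v-1}` of `K_v`:
it is a list using each of `0, ..., v-1` exactly once. -/
def IsHamPath (v : ℕ) (h : List ℕ) : Prop := h.Perm (List.range v)

def trip (x t : ℕ) : List ℕ := if t % 2 = 0 then [t, x+t, 2*x+t] else [2*x+t, x+t, t]

def P (x n : ℕ) : List ℕ := (List.range n).flatMap (trip x)

lemma edgeLengths_cons₂ (v a b : ℕ) (l : List ℕ) :
    edgeLengths v (a :: b :: l) = ell v a b ::ₘ edgeLengths v (b :: l) := by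
  simp [edgeLengths]

lemma edgeLengths_append (v a b : ℕ) (l₁ l₂ : List ℕ) (h₁ : l₁.getLast? = some a) :
    edgeLengths v (l₁ ++ b :: l₂) = edgeLengths v l₁ + (ell v a b ::ₘ edgeLengths v (b :: l₂)) := by
  induction l₁ with
  | nil => simp at h₁
  | cons c t ih =>
    cases t with
    | nil =>
      simp only [List.getLast?_singleton, Option.some.injEq] at h₁
      subst h₁
      simp [edgeLengths_cons₂, edgeLengths]
    | cons d t' =>
      rw [List.getLast?_cons_cons] at h₁
      have h2 := ih h₁
      simp only [List.cons_append] at h2 ⊢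
      rw [edgeLengths_cons₂, h2, edgeLengths_cons₂, Multiset.cons_add]

lemma P_succ (x n : ℕ) : P x (n+1) = P x n ++ trip x n := by
  simp [P, List.range_succ]

lemma repl_step (n : ℕ) (x : ℕ) :
    Multiset.replicate (n+1) 1 + Multiset.replicate (2*(n+1)+2) x
      = Multiset.replicate n 1 + Multiset.replicate (2*n+2) x + ({1} + ({x} + {x})) := by
  have h1' : Multiset.replicate (n+1) 1 = 1 ::ₘ Multiset.replicate n 1 := rfl
  have h2' : Multiset.replicate (2*(n+1)+2) x = x ::ₘ x ::ₘ Multiset.replicate (2*n+2) x := by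
    rw [show 2*(n+1)+2 = (2*n+2)+2 from by ring]
    rfl
  rw [h1', h2']
  simp only [← Multiset.singleton_add]
  ac_rfl

lemma aux (x : ℕ) (hx : 1 ≤ x) (n : ℕ) :
    (↑(P x (n+1)) : Multiset ℕ) = Multiset.range (n+1)
        + (Multiset.range (n+1)).map (fun t => x + t)
        + (Multiset.range (n+1)).map (fun t => 2*x + t)
    ∧ edgeLengths (3*x-1) (P x (n+1)) = Multiset.replicate n 1 + Multiset.replicate (2*n+2) x
    ∧ (P x (n+1)).getLast? = some (if n % 2 = 0 then 2*x + n else n) := by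
  induction n with
  | zero =>
    have hP1 : P x 1 = [0, x, 2*x] := by simp [P, trip, List.range_succ]
    refine ⟨?_, ?_, ?_⟩
    · rw [hP1]
      simp [Multiset.range_succ]
      rfl
    · rw [hP1, edgeLengths_cons₂]
      have e1 : ell (3*x-1) 0 x = x := by simp [ell, Nat.dist] <;> omega
      have e2 : edgeLengths (3*x-1) [x, 2*x] = {x} := by
        simp [edgeLengths, ell, Nat.dist]
        omega
      rw [e1, e2]
      rfl
    · rw [hP1]; simp
  | succ n ih =>
    obtain ⟨ih1, ih2, ih3⟩ := ih
    rw [P_succ]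
    rcases Nat.even_or_odd n with hn | hn
    · have hn0 : n % 2 = 0 := Nat.even_iff.1 hn
      have hn1 : (n+1) % 2 ≠ 0 := by omega
      have htrip : trip x (n+1) = [2*x+(n+1), x+(n+1), n+1] := by simp [trip, hn1]
      rw [htrip]
      rw [if_pos hn0] at ih3
      refine ⟨?_, ?_, ?_⟩
      · rw [← Multiset.coe_add, ih1]
        simp only [Multiset.range_succ, Multiset.map_cons]
        simp only [← Multiset.cons_coe, Multiset.coe_nil, ← Multiset.singleton_add, add_zero]
        ac_rfl
      · rw [edgeLengths_append _ _ _ _ _ ih3, ih2, edgeLengths_cons₂]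
        have e0 : ell (3*x-1) (2*x+n) (2*x+(n+1)) = 1 := by simp [ell, Nat.dist] <;> omega
        have e1 : ell (3*x-1) (2*x+(n+1)) (x+(n+1)) = x := by simp [ell, Nat.dist] <;> omega
        have e2 : edgeLengths (3*x-1) [x+(n+1), n+1] = {x} := by
          simp [edgeLengths, ell, Nat.dist]
          omega
        rw [e0, e1, e2, repl_step]
        simp [Multiset.singleton_add]
        rw [Multiset.cons_swap]
      · have h5 : P x (n+1) ++ [2*x+(n+1), x+(n+1), n+1]
            = (P x (n+1) ++ [2*x+(n+1), x+(n+1)]) ++ [n+1] := by simp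
        rw [h5, List.getLast?_concat, if_neg hn1]
    · have hn0 : n % 2 = 1 := Nat.odd_iff.1 hn
      have hn0' : ¬ (n % 2 = 0) := by omega
      have hn1 : (n+1) % 2 = 0 := by omega
      have htrip : trip x (n+1) = [n+1, x+(n+1), 2*x+(n+1)] := by simp [trip, hn1]
      rw [htrip]
      rw [if_neg hn0'] at ih3
      refine ⟨?_, ?_, ?_⟩
      · rw [← Multiset.coe_add, ih1]
        simp only [Multiset.range_succ, Multiset.map_cons]
        simp only [← Multiset.cons_coe, Multiset.coe_nil, ← Multiset.singleton_add, add_zero]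
        ac_rfl
      · rw [edgeLengths_append _ _ _ _ _ ih3, ih2, edgeLengths_cons₂]
        have e0 : ell (3*x-1) n (n+1) = 1 := by simp [ell, Nat.dist] <;> omega
        have e1 : ell (3*x-1) (n+1) (x+(n+1)) = x := by simp [ell, Nat.dist] <;> omega
        have e2 : edgeLengths (3*x-1) [x+(n+1), 2*x+(n+1)] = {x} := by
          simp [edgeLengths, ell, Nat.dist]
          omega
        rw [e0, e1, e2, repl_step]
        simp [Multiset.singleton_add]
        rw [Multiset.cons_swap]
      · have h5 : P x (n+1) ++ [n+1, x+(n+1), 2*x+(n+1)]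
            = (P x (n+1) ++ [n+1, x+(n+1)]) ++ [2*x+(n+1)] := by simp
        rw [h5, List.getLast?_concat, if_pos hn1]

lemma mrange_add (a b : ℕ) :
    Multiset.range (a+b) = Multiset.range a + (Multiset.range b).map (fun t => a + t) := by
  rw [← Multiset.coe_range, List.range_add, ← Multiset.coe_add, ← Multiset.coe_range,
    ← Multiset.coe_range, Multiset.map_coe]

lemma key1 (m : ℕ) :
    Multiset.range (2*m+1) + (Multiset.range (2*m+1)).map (fun t => (2*m+4) + t)
      + (Multiset.range (2*m+1)).map (fun t => (4*m+8) + t)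
      + ↑([2*m+1, 4*m+5, 4*m+6, 2*m+2, 6*m+9, 6*m+10, 2*m+3, 4*m+7] : List ℕ)
      = Multiset.range (6*m+11) := by
  have B : Multiset.range (2*m+4) = Multiset.range (2*m+1) + ({2*m+1} + ({2*m+2} + {2*m+3})) := by
    rw [show 2*m+4 = (2*m+1)+3 from by ring, mrange_add]
    congr 1
  have C : Multiset.range (2*m+3) = Multiset.range (2*m+1) + ({2*m+1} + {2*m+2}) := by
    rw [show 2*m+3 = (2*m+1)+2 from by ring, mrange_add]
    congr 1
  have D : Multiset.range (4*m+8)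
      = Multiset.range (2*m+4) + (Multiset.range (2*m+4)).map (fun t => (2*m+4)+t) := by
    rw [show 4*m+8 = (2*m+4)+(2*m+4) from by ring, mrange_add]
  have A : Multiset.range (6*m+11)
      = Multiset.range (4*m+8) + (Multiset.range (2*m+3)).map (fun t => (4*m+8)+t) := by
    rw [show 6*m+11 = (4*m+8)+(2*m+3) from by ring, mrange_add]
  rw [A, D, B, C]
  simp only [Multiset.map_add, Multiset.map_singleton]
  rw [show (2*m+4)+(2*m+1) = 4*m+5 from by ring, show (2*m+4)+(2*m+2) = 4*m+6 from by ring,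
    show (2*m+4)+(2*m+3) = 4*m+7 from by ring, show (4*m+8)+(2*m+1) = 6*m+9 from by ring,
    show (4*m+8)+(2*m+2) = 6*m+10 from by ring]
  simp only [← Multiset.cons_coe, Multiset.coe_nil, ← Multiset.singleton_add, add_zero]
  ac_rfl

theorem stmt_6 (x : ℕ) (hx : 4 ≤ x) (hev : Even x) :
    List.Perm ((List.range (x-3)).flatMap (fun t =>
        if t % 2 = 0 then [t, x+t, 2*x+t] else [2*x+t, x+t, t]) ++
      [x-3, 2*x-3, 2*x-2, x-2, 3*x-3, 3*x-2, x-1, 2*x-1])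
      (List.range (3*x-1)) ∧
    edgeLengths (3*x-1)
      ((List.range (x-3)).flatMap (fun t =>
          if t % 2 = 0 then [t, x+t, 2*x+t] else [2*x+t, x+t, t]) ++
        [x-3, 2*x-3, 2*x-2, x-2, 3*x-3, 3*x-2, x-1, 2*x-1]) =
      Multiset.replicate (x-2) 1 + Multiset.replicate (2*x) x := by
  obtain ⟨m, hm⟩ : ∃ m, x = 2*m+4 := by
    obtain ⟨r, hr⟩ := hev; exact ⟨r - 2, by omega⟩
  subst hm
  have hflat : (List.range (2*m+4-3)).flatMap (fun t =>
      if t % 2 = 0 then [t, (2*m+4)+t, 2*(2*m+4)+t] else [2*(2*m+4)+t, (2*m+4)+t, t])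
      = P (2*m+4) (2*m+1) := by
    rw [show 2*m+4-3 = 2*m+1 from by omega]; rfl
  rw [hflat]
  obtain ⟨h1, h2, h3⟩ := aux (2*m+4) (by omega) (2*m)
  rw [show 2*(2*m)+2 = 4*m+2 from by ring] at h2
  rw [show (3:ℕ)*(2*m+4)-1 = 6*m+11 from by omega] at h2
  have hlast : (P (2*m+4) (2*m+1)).getLast? = some (6*m+8) := by
    rw [h3, if_pos (by omega)]
    congr 1
    ring
  constructor
  · rw [← Multiset.coe_eq_coe, ← Multiset.coe_add, h1, Multiset.coe_range]
    simp only [show (3:ℕ)*(2*m+4)-1 = 6*m+11 from by omega,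
      show 2*m+4-3 = 2*m+1 from by omega, show 2*(2*m+4)-3 = 4*m+5 from by omega,
      show 2*(2*m+4)-2 = 4*m+6 from by omega, show 2*m+4-2 = 2*m+2 from by omega,
      show (3:ℕ)*(2*m+4)-3 = 6*m+9 from by omega, show (3:ℕ)*(2*m+4)-2 = 6*m+10 from by omega,
      show 2*m+4-1 = 2*m+3 from by omega, show 2*(2*m+4)-1 = 4*m+7 from by omega,
      show 4*m+8-3 = 4*m+5 from by omega, show 4*m+8-2 = 4*m+6 from by omega,
      show 4*m+8-1 = 4*m+7 from by omega,
      show 2*(2*m+4) = 4*m+8 from by ring]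
    exact key1 m
  · simp only [show (3:ℕ)*(2*m+4)-1 = 6*m+11 from by omega,
      show 2*m+4-3 = 2*m+1 from by omega, show 2*(2*m+4)-3 = 4*m+5 from by omega,
      show 2*(2*m+4)-2 = 4*m+6 from by omega, show 2*m+4-2 = 2*m+2 from by omega,
      show (3:ℕ)*(2*m+4)-3 = 6*m+9 from by omega, show (3:ℕ)*(2*m+4)-2 = 6*m+10 from by omega,
      show 2*m+4-1 = 2*m+3 from by omega, show 2*(2*m+4)-1 = 4*m+7 from by omega,
      show 4*m+8-3 = 4*m+5 from by omega, show 4*m+8-2 = 4*m+6 from by omega,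
      show 4*m+8-1 = 4*m+7 from by omega,
      show 2*(2*m+4) = 4*m+8 from by ring]
    rw [edgeLengths_append _ _ _ _ _ hlast, h2]
    have ec : ell (6*m+11) (6*m+8) (2*m+1) = 2*m+4 := by simp [ell, Nat.dist] <;> omega
    have e1 : ell (6*m+11) (2*m+1) (4*m+5) = 2*m+4 := by simp [ell, Nat.dist] <;> omega
    have e2 : ell (6*m+11) (4*m+5) (4*m+6) = 1 := by simp [ell, Nat.dist] <;> omega
    have e3 : ell (6*m+11) (4*m+6) (2*m+2) = 2*m+4 := by simp [ell, Nat.dist] <;> omega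
    have e4 : ell (6*m+11) (2*m+2) (6*m+9) = 2*m+4 := by simp [ell, Nat.dist] <;> omega
    have e5 : ell (6*m+11) (6*m+9) (6*m+10) = 1 := by simp [ell, Nat.dist] <;> omega
    have e6 : ell (6*m+11) (6*m+10) (2*m+3) = 2*m+4 := by simp [ell, Nat.dist] <;> omega
    have e7 : ell (6*m+11) (2*m+3) (4*m+7) = 2*m+4 := by simp [ell, Nat.dist] <;> omega
    rw [edgeLengths_cons₂, edgeLengths_cons₂, edgeLengths_cons₂, edgeLengths_cons₂,
      edgeLengths_cons₂, edgeLengths_cons₂, edgeLengths_cons₂]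
    rw [ec, e1, e2, e3, e4, e5, e6, e7,
      show edgeLengths (6*m+11) [4*m+7] = 0 from rfl]
    have hA : Multiset.replicate (2*m+2) 1 = 1 ::ₘ 1 ::ₘ Multiset.replicate (2*m) 1 := rfl
    have hB : Multiset.replicate (4*m+8) (2*m+4)
        = Multiset.replicate 6 (2*m+4) + Multiset.replicate (4*m+2) (2*m+4) := by
      rw [show 4*m+8 = 6+(4*m+2) from by ring]
      exact Multiset.replicate_add _ _ _
    rw [hA, hB,
      show (Multiset.replicate 6 (2*m+4) : Multiset ℕ)
        = (2*m+4) ::ₘ (2*m+4) ::ₘ (2*m+4) ::ₘ (2*m+4) ::ₘ (2*m+4) ::ₘ (2*m+4) ::ₘ 0 from rfl]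
    simp only [← Multiset.singleton_add, add_zero]
    ac_rfl
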